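/- Let θ(t) = (U₁(t), …, U_q(t)) with Uᵢ(t) ∈ ℝ^{n_{i−1}×n_i} be a differentiable curve satisfying a gradient flow θ'(t) = −∇E(θ(t)) where E(θ) = L(U₁⋯U_q) for some differentiable L : ℝ^{n₀×n_q} → ℝ. Then for each i = 1, …, q−1, the matrix-valued function t ↦ Uᵢ(t)ᵀUᵢ(t) − U_{i+1}(t)U_{i+1}(t)ᵀ is constant in t. -/

import Mathlib

open Matrix
/-- For a linear network `E(θ) = L(U₁⋯U_q)`, along any gradient flow
`θ' = -∇E(θ)` (whose gradient in `Uᵢ` is `(U₁⋯U_{i-1})ᵀ ∇L(U₁⋯U_q) (U_{i+1}⋯U_q)ᵀ`),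
the quantities `Uᵢᵀ Uᵢ - U_{i+1} U_{i+1}ᵀ` are constant in time, for `i = 1, …, q-1`
(layers are indexed from `0` below).  `Pre t i` is the prefix product `U₁⋯Uᵢ` at time `t`,
`Suf t i` the suffix product `U_{i+1}⋯U_q`, and `G t` is the gradient `∇L` at the full
product, characterized entrywise by directional derivatives of `L`. -/
theorem stmt5 (q : ℕ) (n : ℕ → ℕ)
    (L : Matrix (Fin (n 0)) (Fin (n q)) ℝ → ℝ)
    (U : ℝ → ∀ i : ℕ, Matrix (Fin (n i)) (Fin (n (i + 1))) ℝ)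
    (G : ℝ → Matrix (Fin (n 0)) (Fin (n q)) ℝ)
    (Pre : ℝ → ∀ i : ℕ, Matrix (Fin (n 0)) (Fin (n i)) ℝ)
    (Suf : ℝ → ∀ i : ℕ, Matrix (Fin (n i)) (Fin (n q)) ℝ)
    (hPre0 : ∀ t, Pre t 0 = 1)
    (hPre : ∀ t, ∀ i < q, Pre t (i + 1) = Pre t i * U t i)
    (hSufq : ∀ t, Suf t q = 1)
    (hSuf : ∀ t, ∀ i < q, Suf t i = U t i * Suf t (i + 1))
    (hG : ∀ t a b, HasDerivAt (fun s : ℝ => L (Pre t q + s • Matrix.single a b 1))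
        (G t a b) 0)
    (hflow : ∀ t, ∀ i < q, ∀ a b,
        HasDerivAt (fun s => U s i a b)
          ((-((Pre t i)ᵀ * G t * (Suf t (i + 1))ᵀ)) a b) t) :
    ∀ i, i + 1 < q → ∀ t s : ℝ,
      (U t i)ᵀ * U t i - U t (i + 1) * (U t (i + 1))ᵀ
        = (U s i)ᵀ * U s i - U s (i + 1) * (U s (i + 1))ᵀ := by

  intro i hi t s
  have hi1 : i < q := Nat.lt_of_succ_lt hi
  ext a b
  -- the "velocity" matrices
  set D : ℝ → ∀ j : ℕ, Matrix (Fin (n j)) (Fin (n (j + 1))) ℝ :=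
    fun r j => -((Pre r j)ᵀ * G r * (Suf r (j + 1))ᵀ) with hD
  -- key matrix identity
  have key : ∀ r : ℝ, (D r i)ᵀ * U r i + (U r i)ᵀ * D r i
      = D r (i + 1) * (U r (i + 1))ᵀ + U r (i + 1) * (D r (i + 1))ᵀ := by
    intro r
    have h1 : Pre r (i + 1) = Pre r i * U r i := hPre r i hi1
    have h2 : Suf r (i + 1) = U r (i + 1) * Suf r (i + 1 + 1) := hSuf r (i + 1) hi
    simp only [hD, transpose_neg, transpose_mul, transpose_transpose]
    rw [h1, h2]
    simp only [Matrix.transpose_mul, Matrix.neg_mul, Matrix.mul_neg, Matrix.mul_assoc]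
    exact add_comm _ _
  -- entrywise function
  set f : ℝ → ℝ := fun r =>
    ((U r i)ᵀ * U r i - U r (i + 1) * (U r (i + 1))ᵀ) a b with hf
  have hderiv : ∀ r : ℝ, HasDerivAt f 0 r := by
    intro r
    have e1 : ∀ r' : ℝ, f r' = (∑ k, U r' i k a * U r' i k b)
        - ∑ k, U r' (i + 1) a k * U r' (i + 1) b k := by
      intro r'
      simp [hf, Matrix.sub_apply, Matrix.mul_apply, Matrix.transpose_apply]
    have d1 : HasDerivAt (fun r' => (∑ k, U r' i k a * U r' i k b)
        - ∑ k, U r' (i + 1) a k * U r' (i + 1) b k)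
        ((∑ k, (D r i k a * U r i k b + U r i k a * D r i k b))
          - ∑ k, (D r (i + 1) a k * U r (i + 1) b k + U r (i + 1) a k * D r (i + 1) b k)) r := by
      apply HasDerivAt.sub
      · exact HasDerivAt.fun_sum fun k _ =>
          (hflow r i hi1 k a).mul (hflow r i hi1 k b)
      · exact HasDerivAt.fun_sum fun k _ =>
          (hflow r (i + 1) hi a k).mul (hflow r (i + 1) hi b k)
    have hval : (∑ k, (D r i k a * U r i k b + U r i k a * D r i k b))
        - (∑ k, (D r (i + 1) a k * U r (i + 1) b k + U r (i + 1) a k * D r (i + 1) b k)) = 0 := by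
      have hk := congrArg (fun M => M a b) (key r)
      simp only [Matrix.add_apply, Matrix.mul_apply, Matrix.transpose_apply] at hk
      rw [sub_eq_zero, Finset.sum_add_distrib, Finset.sum_add_distrib]
      exact hk
    have := hval ▸ d1
    exact HasDerivAt.congr_deriv (this.congr_of_eventuallyEq
      (Filter.Eventually.of_forall fun r' => (e1 r').symm)) rfl
  have hc : f t = f s :=
    is_const_of_deriv_eq_zero (fun r => (hderiv r).differentiableAt)
      (fun r => (hderiv r).deriv) t s
  simpa [hf] using hc
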